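/- Fix m ≥ 1 and weakly decreasing nonnegative integer vectors λ, μ ∈ ℤⁿ with λ_i ≥ μ_i for all i. Let Q_{λ/μ} be the set of all real m×n matrices x = (x^i_j) satisfying x^{i+1}_j ≥ x^i_j for 1 ≤ i < m, 1 ≤ j ≤ n, x^i_j ≥ x^{i+1}_{j+1} for 1 ≤ i < m, 1 ≤ j < n, x^1 = μ and x^m = λ (the Gelfand–Tsetlin polytope without weight restriction). Then Q_{λ/μ} has the integer decomposition property: for every integer k ≥ 1, every point of Q_{kλ/kμ} with all entries in ℤ is an entrywise sum of k points of Q_{λ/μ} with all entries in ℤ. -/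

import Mathlib

open Finset

/-- A real `(m+1) × n` array satisfying the Gelfand–Tsetlin inequalities:
rows increase upwards along columns, and down-right diagonals decrease.
Row `0` is the bottom row, row `m` the top row. -/
def IsGTPattern (m n : ℕ) (x : Fin (m + 1) → Fin n → ℝ) : Prop :=
  (∀ (i : Fin m) (j : Fin n), x i.castSucc j ≤ x i.succ j) ∧
  (∀ (i : Fin m) (j : Fin n) (h : (j : ℕ) + 1 < n),
    x i.succ ⟨(j : ℕ) + 1, h⟩ ≤ x i.castSucc j)

/-- The Gelfand–Tsetlin polytope `Q_{λ/μ}` without weight restriction: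
row `0` is `μ` and row `m` is `λ`. -/
def gtFreePolytope (m n : ℕ) (lam mu : Fin n → ℤ) :
    Set (Fin (m + 1) → Fin n → ℝ) :=
  {x | IsGTPattern m n x ∧ (∀ j, x 0 j = (mu j : ℝ)) ∧
    ∀ j, x (Fin.last m) j = (lam j : ℝ)}


lemma sum_ediv_aux (k : ℕ) (hk : 0 < k) (z : ℤ) :
    ∑ t : Fin k, (z + (t : ℤ)) / (k : ℤ) = z := by
  have hk' : (0 : ℤ) < (k : ℤ) := by exact_mod_cast hk
  have hkne : (k : ℤ) ≠ 0 := hk'.ne'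
  set q := z / (k : ℤ) with hq
  set r := z % (k : ℤ) with hr
  have hr0 : 0 ≤ r := Int.emod_nonneg z hkne
  have hrk : r < k := Int.emod_lt_of_pos z hk'
  have hz : z = (k : ℤ) * q + r := by rw [hq, hr]; exact (Int.mul_ediv_add_emod z k).symm
  have hterm : ∀ t : Fin k, (z + (t : ℤ)) / (k : ℤ)
      = (r + (t : ℤ)) / (k : ℤ) + q := by
    intro t
    have : z + (t : ℤ) = (r + (t : ℤ)) + q * (k : ℤ) := by rw [hz]; ring
    rw [this, Int.add_mul_ediv_right _ _ hkne]
  rw [Finset.sum_congr rfl (fun t _ => hterm t), Finset.sum_add_distrib,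
    Finset.sum_const, Finset.card_univ, Fintype.card_fin]
  have hind : ∀ t : Fin k, (r + (t : ℤ)) / (k : ℤ)
      = if (k : ℤ) ≤ r + (t : ℤ) then 1 else 0 := by
    intro t
    have ht0 : (0 : ℤ) ≤ (t : ℤ) := by positivity
    have htk : (t : ℤ) < (k : ℤ) := by exact_mod_cast t.isLt
    by_cases h : (k : ℤ) ≤ r + (t : ℤ)
    · simp only [h, if_true]
      have h1 : r + (t : ℤ) = (r + (t : ℤ) - (k : ℤ)) + 1 * (k : ℤ) := by ring
      rw [h1, Int.add_mul_ediv_right _ _ hkne,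
        Int.ediv_eq_zero_of_lt (by linarith) (by linarith)]
      norm_num
    · push_neg at h
      simp only [h.not_ge, if_false]
      exact Int.ediv_eq_zero_of_lt (by linarith) h
  rw [Finset.sum_congr rfl (fun t _ => hind t)]
  have hcount : ∑ t : Fin k, (if (k : ℤ) ≤ r + (t : ℤ) then (1:ℤ) else 0) = r := by
    rw [Fin.sum_univ_eq_sum_range (fun t => if (k : ℤ) ≤ r + (t : ℤ) then (1:ℤ) else 0)]
    have hfil : (range k).filter (fun i : ℕ => (k:ℤ) ≤ r + ↑i)
        = Finset.Ico (k - r.toNat) k := by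
      ext i
      simp only [Finset.mem_filter, Finset.mem_range, Finset.mem_Ico]
      omega
    rw [Finset.sum_ite, Finset.sum_const, Finset.sum_const, hfil, Nat.card_Ico]
    simp only [nsmul_eq_mul, mul_one, mul_zero, add_zero]
    omega
  rw [hcount, hz]; ring

lemma ediv_shift_exact (k : ℕ) (hk : 0 < k) (a : ℤ) (t : Fin k) :
    ((k : ℤ) * a + (t : ℤ)) / (k : ℤ) = a := by
  have hk' : (0 : ℤ) < (k : ℤ) := by exact_mod_cast hk
  have hkne : (k : ℤ) ≠ 0 := hk'.ne'
  have h1 : (k : ℤ) * a + (t : ℤ) = (t : ℤ) + a * (k : ℤ) := by ring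
  have ht0 : (0 : ℤ) ≤ (t : ℤ) := by positivity
  have htk : (t : ℤ) < (k : ℤ) := by exact_mod_cast t.isLt
  rw [h1, Int.add_mul_ediv_right _ _ hkne, Int.ediv_eq_zero_of_lt ht0 htk, zero_add]

/-- The weight-unrestricted GT-polytope `Q_{λ/μ}` has the integer
decomposition property: every integral point of `Q_{kλ/kμ}` is an entrywise
sum of `k` integral points of `Q_{λ/μ}`. -/
theorem statement18 (m n : ℕ) (hn : 1 ≤ n) (lam mu : Fin n → ℤ)
    (hlam : Antitone lam) (hmu : Antitone mu)
    (hmu0 : ∀ j, 0 ≤ mu j) (hge : ∀ j, mu j ≤ lam j)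
    (k : ℕ) (hk : 1 ≤ k)
    (x : Fin (m + 1) → Fin n → ℝ)
    (hx : x ∈ gtFreePolytope m n (fun j => (k : ℤ) * lam j) fun j => (k : ℤ) * mu j)
    (hint : ∀ i j, ∃ z : ℤ, x i j = (z : ℝ)) :
    ∃ y : Fin k → Fin (m + 1) → Fin n → ℝ,
      (∀ t, y t ∈ gtFreePolytope m n lam mu) ∧
      (∀ t i j, ∃ z : ℤ, y t i j = (z : ℝ)) ∧
      ∀ i j, x i j = ∑ t, y t i j := by
  have hk0 : 0 < k := hk
  have hk' : (0 : ℤ) < (k : ℤ) := by exact_mod_cast hk0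
  choose z hz using hint
  obtain ⟨⟨h1, h2⟩, h0, hm⟩ := hx
  -- integer versions
  have h1' : ∀ (i : Fin m) (j : Fin n), z i.castSucc j ≤ z i.succ j := by
    intro i j
    have := h1 i j
    rw [hz, hz] at this
    exact_mod_cast this
  have h2' : ∀ (i : Fin m) (j : Fin n) (h : (j : ℕ) + 1 < n),
      z i.succ ⟨(j : ℕ) + 1, h⟩ ≤ z i.castSucc j := by
    intro i j h
    have := h2 i j h
    rw [hz, hz] at this
    exact_mod_cast this
  have h0' : ∀ j, z 0 j = (k : ℤ) * mu j := by
    intro j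
    have := h0 j
    rw [hz] at this
    exact_mod_cast this
  have hm' : ∀ j, z (Fin.last m) j = (k : ℤ) * lam j := by
    intro j
    have := hm j
    rw [hz] at this
    exact_mod_cast this
  refine ⟨fun t i j => (((z i j + (t : ℤ)) / (k : ℤ) : ℤ) : ℝ), ?_, ?_, ?_⟩
  · intro t
    refine ⟨⟨fun i j => ?_, fun i j h => ?_⟩, fun j => ?_, fun j => ?_⟩
    · beta_reduce
      exact_mod_cast Int.ediv_le_ediv hk' (by linarith [h1' i j] : z i.castSucc j + (t : ℤ) ≤ z i.succ j + (t : ℤ))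
    · beta_reduce
      exact_mod_cast Int.ediv_le_ediv hk' (by linarith [h2' i j h] : z i.succ ⟨(j : ℕ) + 1, h⟩ + (t : ℤ) ≤ z i.castSucc j + (t : ℤ))
    · beta_reduce
      rw [h0' j, ediv_shift_exact k hk0 (mu j) t]
    · beta_reduce
      rw [hm' j, ediv_shift_exact k hk0 (lam j) t]
  · intro t i j; exact ⟨_, rfl⟩
  · intro i j
    rw [hz]
    rw [show ∑ t : Fin k, (((z i j + (t : ℤ)) / (k : ℤ) : ℤ) : ℝ)
        = ((∑ t : Fin k, (z i j + (t : ℤ)) / (k : ℤ) : ℤ) : ℝ) by push_cast; rfl]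
    rw [sum_ediv_aux k hk0]
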